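/- The closed unit ball of (c₀, |||·|||) is weak*-dense in U = {x ∈ ℓ∞ : |||x||| ≤ 1}; more precisely, for every x ∈ U there is a sequence (x_m) in c₀ with |||x_m||| = |||x||| ≤ 1 converging to x coordinate-wise. -/

import Mathlib

open Filter Topology

/-- The sup norm of a real sequence. -/
noncomputable def supNorm (x : ℕ → ℝ) : ℝ := ⨆ k, |x k|

/-- The duality pairing `⟨x, v⟩ = ∑ₖ x k * v k`. -/
noncomputable def pairing (x v : ℕ → ℝ) : ℝ := ∑' k, x k * v k

/-- Read's norm `|||x||| = ‖x‖_∞ + ∑ₙ rₙ |⟨x, vₙ⟩|`. -/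
noncomputable def readNorm (r : ℕ → ℝ) (v : ℕ → ℕ → ℝ) (x : ℕ → ℝ) : ℝ :=
  supNorm x + ∑' n, r n * |pairing x (v n)|

section Aux

variable {r : ℕ → ℝ} {v : ℕ → ℕ → ℝ} {x : ℕ → ℝ} {C : ℝ}

lemma pairing_summable (hv1 : ∀ n, Summable fun k => |v n k|)
    (hC : ∀ k, |x k| ≤ C) (n : ℕ) : Summable fun k => x k * v n k := by
  apply Summable.of_abs
  apply Summable.of_nonneg_of_le (fun k => abs_nonneg _) (fun k => ?_)
    ((hv1 n).mul_left C)
  rw [abs_mul]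
  exact mul_le_mul_of_nonneg_right (hC k) (abs_nonneg _)

lemma abs_pairing_le (hv1 : ∀ n, Summable fun k => |v n k|)
    (hv2 : ∀ n, ∑' k, |v n k| = 1)
    (hC : ∀ k, |x k| ≤ C) (n : ℕ) : |pairing x (v n)| ≤ C := by
  have habs : Summable fun k => |x k * v n k| := by
    apply Summable.of_nonneg_of_le (fun k => abs_nonneg _) (fun k => ?_)
      ((hv1 n).mul_left C)
    rw [abs_mul]
    exact mul_le_mul_of_nonneg_right (hC k) (abs_nonneg _)
  have hnorm : |pairing x (v n)| ≤ ∑' k, |x k * v n k| := by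
    have h := norm_tsum_le_tsum_norm (f := fun k => x k * v n k)
      (by simpa only [Real.norm_eq_abs] using habs)
    simpa only [Real.norm_eq_abs, pairing] using h
  calc |pairing x (v n)| ≤ ∑' k, |x k * v n k| := hnorm
    _ ≤ ∑' k, C * |v n k| := by
        apply Summable.tsum_le_tsum (fun k => ?_) habs ((hv1 n).mul_left C)
        rw [abs_mul]
        exact mul_le_mul_of_nonneg_right (hC k) (abs_nonneg _)
    _ = C := by rw [tsum_mul_left, hv2 n, mul_one]

lemma supNorm_bddAbove (hC : ∀ k, |x k| ≤ C) :
    BddAbove (Set.range fun k => |x k|) :=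
  ⟨C, by rintro _ ⟨k, rfl⟩; exact hC k⟩

lemma abs_le_supNorm (hC : ∀ k, |x k| ≤ C) (k : ℕ) : |x k| ≤ supNorm x :=
  le_ciSup (supNorm_bddAbove hC) k

/-- Homogeneity of `readNorm` under scaling by a nonnegative constant. -/
lemma readNorm_smul {c : ℝ} (hc : 0 ≤ c) :
    readNorm r v (fun k => c * x k) = c * readNorm r v x := by
  unfold readNorm supNorm pairing
  rw [mul_add]
  congr 1
  · rw [Real.mul_iSup_of_nonneg hc]
    congr 1; funext k
    rw [abs_mul, abs_of_nonneg hc]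
  · rw [← tsum_mul_left]
    congr 1; funext n
    have h : (∑' k, c * x k * v n k) = c * ∑' k, x k * v n k := by
      rw [← tsum_mul_left]; congr 1; funext k; ring
    rw [h, abs_mul, abs_of_nonneg hc]; ring

end Aux

theorem c0_ball_weak_star_dense
    (r : ℕ → ℝ) (hr0 : ∀ n, 0 ≤ r n) (hrsum : Summable r)
    (v : ℕ → ℕ → ℝ) (hv1 : ∀ n, Summable fun k => |v n k|)
    (hv2 : ∀ n, ∑' k, |v n k| = 1)
    (x : ℕ → ℝ) (hxbdd : ∃ C, ∀ k, |x k| ≤ C)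
    (hx : readNorm r v x ≤ 1) :
    ∃ y : ℕ → ℕ → ℝ,
      (∀ m, Tendsto (y m) atTop (𝓝 0)) ∧
      (∀ m, readNorm r v (y m) = readNorm r v x) ∧
      (∀ k, Tendsto (fun m => y m k) atTop (𝓝 (x k))) := by
  obtain ⟨C, hC⟩ := hxbdd
  have hC0 : 0 ≤ C := le_trans (abs_nonneg _) (hC 0)
  by_cases hx0 : ∀ k, x k = 0
  · have hxeq : x = fun _ => (0 : ℝ) := funext hx0
    refine ⟨fun _ => x, fun m => ?_, fun m => rfl, fun k => tendsto_const_nhds⟩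
    rw [hxeq]; exact tendsto_const_nhds
  push_neg at hx0
  obtain ⟨k₀, hk₀⟩ := hx0
  set T : ℕ → ℕ → ℝ := fun m k => if k < m then x k else 0 with hT
  have hTC : ∀ m k, |T m k| ≤ C := by
    intro m k; simp only [hT]
    split
    · exact hC k
    · simpa using hC0
  set R : ℝ := readNorm r v x with hR
  set Rm : ℕ → ℝ := fun m => readNorm r v (T m) with hRm
  have hRpos : 0 < R := by
    have h1 : |x k₀| ≤ supNorm x := abs_le_supNorm hC k₀
    have h2 : 0 ≤ ∑' n, r n * |pairing x (v n)| :=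
      tsum_nonneg fun n => mul_nonneg (hr0 n) (abs_nonneg _)
    have h3 : 0 < |x k₀| := abs_pos.mpr hk₀
    rw [hR]; unfold readNorm; linarith
  have hRmpos : ∀ m, k₀ < m → 0 < Rm m := by
    intro m hm
    have h1 : |T m k₀| ≤ supNorm (T m) := abs_le_supNorm (hTC m) k₀
    have h2 : 0 ≤ ∑' n, r n * |pairing (T m) (v n)| :=
      tsum_nonneg fun n => mul_nonneg (hr0 n) (abs_nonneg _)
    have h3 : 0 < |T m k₀| := by
      have : T m k₀ = x k₀ := by simp [hT, hm]
      rw [this]; exact abs_pos.mpr hk₀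
    have h4 : Rm m = supNorm (T m) + ∑' n, r n * |pairing (T m) (v n)| := rfl
    rw [h4]; linarith
  have hRmnonneg : ∀ m, 0 ≤ Rm m := by
    intro m
    have h1 : (0:ℝ) ≤ |T m 0| := abs_nonneg _
    have h2 : |T m 0| ≤ supNorm (T m) := abs_le_supNorm (hTC m) 0
    have h3 : 0 ≤ ∑' n, r n * |pairing (T m) (v n)| :=
      tsum_nonneg fun n => mul_nonneg (hr0 n) (abs_nonneg _)
    have h4 : Rm m = supNorm (T m) + ∑' n, r n * |pairing (T m) (v n)| := rfl
    rw [h4]; linarith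
  -- supNorm of truncations is ≤ supNorm x and monotone
  have hTle : ∀ m k, |T m k| ≤ |x k| := by
    intro m k; simp only [hT]; split
    · exact le_refl _
    · simpa using abs_nonneg (x k)
  have hsup_le : ∀ m, supNorm (T m) ≤ supNorm x :=
    fun m => ciSup_le fun k => le_trans (hTle m k) (abs_le_supNorm hC k)
  have hsupMono : Monotone fun m => supNorm (T m) := by
    intro m m' hmm
    apply ciSup_le fun k => ?_
    by_cases h : k < m
    · have h' : k < m' := lt_of_lt_of_le h hmm
      have : |T m k| = |T m' k| := by simp [hT, h, h']
      rw [this]; exact abs_le_supNorm (hTC m') k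
    · have : |T m k| = 0 := by simp [hT, h]
      rw [this]
      exact le_trans (abs_nonneg (T m' 0)) (abs_le_supNorm (hTC m') 0)
  have hsuplim : Tendsto (fun m => supNorm (T m)) atTop (𝓝 (supNorm x)) := by
    have hbdd : BddAbove (Set.range fun m => supNorm (T m)) :=
      ⟨supNorm x, by rintro _ ⟨m, rfl⟩; exact hsup_le m⟩
    have h1 := tendsto_atTop_ciSup hsupMono hbdd
    have h2 : (⨆ m, supNorm (T m)) = supNorm x := by
      apply le_antisymm (ciSup_le hsup_le)
      apply ciSup_le fun k => ?_
      have hk : |x k| = |T (k + 1) k| := by simp [hT]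
      rw [hk]
      exact le_trans (abs_le_supNorm (hTC (k + 1)) k) (le_ciSup hbdd (k + 1))
    rwa [h2] at h1
  -- pairing of truncations converges
  have hpairlim : ∀ n, Tendsto (fun m => pairing (T m) (v n)) atTop
      (𝓝 (pairing x (v n))) := by
    intro n
    have heq : ∀ m, pairing (T m) (v n) = ∑ k ∈ Finset.range m, x k * v n k := by
      intro m
      unfold pairing
      rw [tsum_eq_sum (s := Finset.range m)
        (by intro k hk; simp at hk; simp [hT, Nat.not_lt.mpr hk])]
      apply Finset.sum_congr rfl fun k hk => ?_
      simp at hk; simp [hT, hk]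
    simp only [heq]
    exact (pairing_summable hv1 hC n).hasSum.tendsto_sum_nat
  -- tsum part converges via dominated convergence
  have htsumlim : Tendsto (fun m => ∑' n, r n * |pairing (T m) (v n)|) atTop
      (𝓝 (∑' n, r n * |pairing x (v n)|)) := by
    apply tendsto_tsum_of_dominated_convergence (bound := fun n => r n * C)
      (hrsum.mul_right C)
    · intro n
      exact ((hpairlim n).abs).const_mul (r n)
    · filter_upwards with m n
      rw [Real.norm_eq_abs, abs_mul, abs_of_nonneg (hr0 n), abs_abs]
      exact mul_le_mul_of_nonneg_left (abs_pairing_le hv1 hv2 (hTC m) n) (hr0 n)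
  have hRlim : Tendsto Rm atTop (𝓝 R) := by
    have := hsuplim.add htsumlim
    simpa [hRm, hR, readNorm] using this
  -- the approximating sequence
  set m₀ : ℕ := k₀ + 1 with hm₀
  refine ⟨fun m k => (R / Rm (m + m₀)) * T (m + m₀) k, ?_, ?_, ?_⟩
  · intro m
    have heq : (fun _ : ℕ => (0:ℝ)) =ᶠ[atTop]
        fun k => (R / Rm (m + m₀)) * T (m + m₀) k := by
      filter_upwards [eventually_ge_atTop (m + m₀)] with k hk
      simp [hT, Nat.not_lt.mpr hk]
    exact Tendsto.congr' heq tendsto_const_nhds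
  · intro m
    have hpos : 0 < Rm (m + m₀) := hRmpos _ (by omega)
    have hc : 0 ≤ R / Rm (m + m₀) := div_nonneg hRpos.le hpos.le
    rw [readNorm_smul hc]
    show R / Rm (m + m₀) * Rm (m + m₀) = R
    field_simp
  · intro k
    have hclim : Tendsto (fun m => R / Rm (m + m₀)) atTop (𝓝 1) := by
      have h1 : Tendsto (fun m => Rm (m + m₀)) atTop (𝓝 R) :=
        hRlim.comp (tendsto_add_atTop_nat m₀)
      have := (tendsto_const_nhds (x := R)).div h1 hRpos.ne'
      simpa [div_self hRpos.ne', Pi.div_def] using this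
    have h2 : Tendsto (fun m => (R / Rm (m + m₀)) * x k) atTop (𝓝 (x k)) := by
      have := hclim.mul_const (x k)
      simpa using this
    apply Tendsto.congr' ?_ h2
    filter_upwards [eventually_ge_atTop k] with m hm
    have hk : k < m + m₀ := by omega
    simp [hT, hk]
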